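/- In the braid group B₃ with presentation Gp⟨a, b, c | a³ = b² = c⟩, the rewriting system R = { a⁻¹ → c⁻¹a², b⁻¹ → c⁻¹b, a³ → c, b² → c, ac → ca, ac⁻¹ → c⁻¹a, bc → cb, bc⁻¹ → c⁻¹b, cc⁻¹ → 1, c⁻¹c → 1 } is locally confluent: every critical pair arising from overlap or inclusion ambiguities among these rules resolves. -/

import Mathlib

open Relation

/-- One-step reduction of the string rewriting system `R`. -/
def RWStep {α : Type*} (R : Set (List α × List α)) (u v : List α) : Prop :=
  ∃ a l r b, (l, r) ∈ R ∧ u = a ++ l ++ b ∧ v = a ++ r ++ b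

/-- `R` is terminating: there is no infinite sequence of one-step reductions. -/
def RWTerminating {α : Type*} (R : Set (List α × List α)) : Prop :=
  ¬ ∃ f : ℕ → List α, ∀ n, RWStep R (f n) (f (n + 1))

/-- A word is irreducible if no one-step reduction applies to it. -/
def RWIrred {α : Type*} (R : Set (List α × List α)) (w : List α) : Prop :=
  ¬ ∃ z, RWStep R w z


/-- The alphabet `{a, b, c, a⁻¹, b⁻¹, c⁻¹}` of the braid group `B₃`. -/
inductive B3Letter : Type
  | a | b | c | ai | bi | ci
deriving DecidableEq

open B3Letter

/-- The rewriting system for `B₃ = Gp⟨a, b, c | a³ = b² = c⟩` from Pedersen et al. -/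
def B3System : Set (List B3Letter × List B3Letter) :=
  {([ai], [ci, a, a]), ([bi], [ci, b]), ([a, a, a], [c]), ([b, b], [c]),
   ([a, c], [c, a]), ([a, ci], [ci, a]), ([b, c], [c, b]), ([b, ci], [ci, b]),
   ([c, ci], []), ([ci, c], [])}

/-! ### Auxiliary normal-form machinery -/

/-- Prepend `c` to a word, cancelling a leading `c⁻¹`. -/
def pcC : List B3Letter → List B3Letter
  | ci :: s => s
  | t => c :: t

/-- Prepend `c⁻¹` to a word, cancelling a leading `c`. -/
def pc : List B3Letter → List B3Letter
  | c :: s => s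
  | t => ci :: t

/-- Prepend a letter to a word, normalizing on the fly. -/
def pushL : B3Letter → List B3Letter → List B3Letter
  | a, a :: a :: s => pcC s
  | a, c :: s => pcC (pushL a s)
  | a, ci :: s => pc (pushL a s)
  | b, b :: s => pcC s
  | b, c :: s => pcC (pushL b s)
  | b, ci :: s => pc (pushL b s)
  | c, t => pcC t
  | ci, t => pc t
  | x, t => x :: t

/-- Local normality check at the front of a word. -/
def hd2ok : B3Letter → List B3Letter → Bool
  | ai, _ => false
  | bi, _ => false
  | a, a :: a :: _ => false
  | a, c :: _ => false
  | a, ci :: _ => false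
  | b, b :: _ => false
  | b, c :: _ => false
  | b, ci :: _ => false
  | c, ci :: _ => false
  | ci, c :: _ => false
  | _, _ => true

/-- A word is in normal form: no left-hand side of a rule occurs. -/
def okB : List B3Letter → Bool
  | [] => true
  | x :: s => hd2ok x s && okB s

theorem okB_cons {x s} : okB (x :: s) = (hd2ok x s && okB s) := rfl

theorem okB_tail {x s} (h : okB (x :: s)) : okB s := by
  simp [okB] at h; exact h.2

theorem pcC_pc {t} (h : okB t) : pcC (pc t) = t := by
  rcases t with _ | ⟨x, s⟩
  · decide
  · cases x <;> rcases s with _ | ⟨y, s'⟩ <;> (try cases y) <;> simp_all [okB, hd2ok, pc, pcC]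

theorem pc_pcC {t} (h : okB t) : pc (pcC t) = t := by
  rcases t with _ | ⟨x, s⟩
  · decide
  · cases x <;> rcases s with _ | ⟨y, s'⟩ <;> (try cases y) <;> simp_all [okB, hd2ok, pc, pcC]

theorem pcC_eq {t : List B3Letter} (h : t.head? ≠ some ci) : pcC t = c :: t := by
  rcases t with _ | ⟨x, s⟩ <;> [rfl; (cases x <;> simp_all [pcC])]

theorem pc_eq {t : List B3Letter} (h : t.head? ≠ some c) : pc t = ci :: t := by
  rcases t with _ | ⟨x, s⟩ <;> [rfl; (cases x <;> simp_all [pc])]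

theorem pcC_ok {t} (h : okB t) : okB (pcC t) := by
  rcases t with _ | ⟨x, s⟩
  · decide
  · cases x <;> simp_all [pcC, okB, hd2ok]

theorem pc_ok {t} (h : okB t) : okB (pc t) := by
  rcases t with _ | ⟨x, s⟩
  · decide
  · cases x <;> simp_all [pc, okB, hd2ok]

theorem ok_head {x s} (h : okB (x :: s)) (hx : x = a ∨ x = b ∨ x = c) :
    s.head? ≠ some ci := by
  rcases s with _ | ⟨y, u⟩
  · simp
  · rcases hx with rfl | rfl | rfl <;> cases y <;> simp_all [okB, hd2ok]

/-- Evaluation of `pushL` in the default case. -/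
theorem pushL_default {x : B3Letter} {t : List B3Letter}
    (h1 : ∀ s, x = a → t = a :: a :: s → False)
    (h2 : ∀ s, x = a → t = c :: s → False)
    (h3 : ∀ s, x = a → t = ci :: s → False)
    (h4 : ∀ s, x = b → t = b :: s → False)
    (h5 : ∀ s, x = b → t = c :: s → False)
    (h6 : ∀ s, x = b → t = ci :: s → False)
    (h7 : x = c → False) (h8 : x = ci → False) :
    pushL x t = x :: t := by
  cases x <;> rcases t with _ | ⟨y, u⟩ <;> (try cases y) <;>
    (try rcases u with _ | ⟨z, v⟩) <;> (try cases z) <;>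
    first
      | rfl
      | (exfalso; first
          | exact h1 _ rfl rfl | exact h2 _ rfl rfl | exact h3 _ rfl rfl
          | exact h4 _ rfl rfl | exact h5 _ rfl rfl | exact h6 _ rfl rfl
          | exact h7 rfl | exact h8 rfl)

theorem pushL_head {x t} (h : okB t) (hh : t.head? ≠ some ci) (hx : x = a ∨ x = b) :
    (pushL x t).head? ≠ some ci := by
  induction x, t using pushL.induct with
  | case1 s =>
    have hs : s.head? ≠ some ci := ok_head (okB_tail h) (Or.inl rfl)
    simp [pushL, pcC_eq hs]
  | case2 s ih =>
    have hs : (pushL a s).head? ≠ some ci :=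
      ih (okB_tail h) (ok_head h (Or.inr (Or.inr rfl))) (Or.inl rfl)
    simp [pushL, pcC_eq hs]
  | case3 s ih => simp at hh
  | case4 s =>
    have hs : s.head? ≠ some ci := ok_head h (Or.inr (Or.inl rfl))
    simp [pushL, pcC_eq hs]
  | case5 s ih =>
    have hs : (pushL b s).head? ≠ some ci :=
      ih (okB_tail h) (ok_head h (Or.inr (Or.inr rfl))) (Or.inr rfl)
    simp [pushL, pcC_eq hs]
  | case6 s ih => simp at hh
  | case7 t => rcases hx with h | h <;> simp at h
  | case8 t => rcases hx with h | h <;> simp at h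
  | case9 x t h1 h2 h3 h4 h5 h6 h7 h8 =>
    rw [pushL_default h1 h2 h3 h4 h5 h6 h7 h8]
    rcases hx with rfl | rfl <;> simp

theorem pushL_ok {x t} (h : okB t) (hx1 : x ≠ ai) (hx2 : x ≠ bi) :
    okB (pushL x t) := by
  induction x, t using pushL.induct with
  | case1 s => exact pcC_ok (okB_tail (okB_tail h))
  | case2 s ih => exact pcC_ok (ih (okB_tail h) hx1 hx2)
  | case3 s ih => exact pc_ok (ih (okB_tail h) hx1 hx2)
  | case4 s => exact pcC_ok (okB_tail h)
  | case5 s ih => exact pcC_ok (ih (okB_tail h) hx1 hx2)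
  | case6 s ih => exact pc_ok (ih (okB_tail h) hx1 hx2)
  | case7 t => simp only [pushL]; exact pcC_ok h
  | case8 t => simp only [pushL]; exact pc_ok h
  | case9 x t h1 h2 h3 h4 h5 h6 h7 h8 =>
    rw [pushL_default h1 h2 h3 h4 h5 h6 h7 h8, okB_cons, h, Bool.and_true]
    cases x <;> rcases t with _ | ⟨y, u⟩ <;> (try cases y) <;>
      (try rcases u with _ | ⟨z, v⟩) <;> (try cases z) <;>
      first
        | rfl
        | (exfalso; first
            | exact h1 _ rfl rfl | exact h2 _ rfl rfl | exact h3 _ rfl rfl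
            | exact h4 _ rfl rfl | exact h5 _ rfl rfl | exact h6 _ rfl rfl
            | exact h7 rfl | exact h8 rfl | exact hx1 rfl | exact hx2 rfl)

theorem ruleAC {t} (h : okB t) : pushL a (pcC t) = pcC (pushL a t) := by
  rcases t with _ | ⟨x, s⟩
  · rfl
  · cases x <;>
      [skip; skip; skip; skip; skip;
       (show pushL a s = pcC (pushL a (ci :: s));
        have e2 : pushL a (ci :: s) = pc (pushL a s) := by simp [pushL]
        rw [e2, pcC_pc (pushL_ok (okB_tail h) (by simp) (by simp))])] <;>
    · rw [pcC_eq (by simp)]; simp [pushL]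

theorem ruleACi {t} (h : okB t) : pushL a (pc t) = pc (pushL a t) := by
  rcases t with _ | ⟨x, s⟩
  · rfl
  · cases x <;>
      [skip; skip;
       (show pushL a s = pc (pushL a (c :: s));
        have e2 : pushL a (c :: s) = pcC (pushL a s) := by simp [pushL]
        rw [e2, pc_pcC (pushL_ok (okB_tail h) (by simp) (by simp))]);
       skip; skip; skip] <;>
    · rw [pc_eq (by simp)]; simp [pushL]

theorem ruleBC {t} (h : okB t) : pushL b (pcC t) = pcC (pushL b t) := by
  rcases t with _ | ⟨x, s⟩
  · rfl
  · cases x <;>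
      [skip; skip; skip; skip; skip;
       (show pushL b s = pcC (pushL b (ci :: s));
        have e2 : pushL b (ci :: s) = pc (pushL b s) := by simp [pushL]
        rw [e2, pcC_pc (pushL_ok (okB_tail h) (by simp) (by simp))])] <;>
    · rw [pcC_eq (by simp)]; simp [pushL]

theorem ruleBCi {t} (h : okB t) : pushL b (pc t) = pc (pushL b t) := by
  rcases t with _ | ⟨x, s⟩
  · rfl
  · cases x <;>
      [skip; skip;
       (show pushL b s = pc (pushL b (c :: s));
        have e2 : pushL b (c :: s) = pcC (pushL b s) := by simp [pushL]
        rw [e2, pc_pcC (pushL_ok (okB_tail h) (by simp) (by simp))]);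
       skip; skip; skip] <;>
    · rw [pc_eq (by simp)]; simp [pushL]

theorem ruleBB {t} (h : okB t) : pushL b (pushL b t) = pcC t := by
  induction t with
  | nil => rfl
  | cons x s ih =>
    cases x with
    | a => simp [pushL, pcC]
    | b =>
      rcases s with _ | ⟨y, u⟩
      · rfl
      · cases y <;> simp_all [okB, hd2ok, pushL, pcC]
    | c =>
      have hs := okB_tail h
      have hhd : s.head? ≠ some ci := ok_head h (Or.inr (Or.inr rfl))
      have e1 : pushL b (c :: s) = pcC (pushL b s) := by simp [pushL]
      rw [e1, ruleBC (pushL_ok hs (by simp) (by simp)), ih hs, pcC_eq hhd]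
    | ci =>
      have hs := okB_tail h
      have e1 : pushL b (ci :: s) = pc (pushL b s) := by simp [pushL]
      rw [e1, ruleBCi (pushL_ok hs (by simp) (by simp)), ih hs, pc_pcC hs]
      rfl
    | ai => simp [okB, hd2ok] at h
    | bi => simp [okB, hd2ok] at h

theorem ruleAAA {t} (h : okB t) : pushL a (pushL a (pushL a t)) = pcC t := by
  induction t with
  | nil => rfl
  | cons x s ih =>
    cases x with
    | a =>
      rcases s with _ | ⟨y, u⟩
      · rfl
      · cases y with
        | a =>
          rcases u with _ | ⟨z, v⟩
          · rfl
          · cases z <;> simp_all [okB, hd2ok, pushL, pcC]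
        | b => simp [pushL, pcC]
        | c => simp_all [okB, hd2ok]
        | ci => simp_all [okB, hd2ok]
        | ai => simp_all [okB, hd2ok]
        | bi => simp_all [okB, hd2ok]
    | b => simp [pushL, pcC]
    | c =>
      have hs := okB_tail h
      have hhd : s.head? ≠ some ci := ok_head h (Or.inr (Or.inr rfl))
      have hok1 : okB (pushL a s) := pushL_ok hs (by simp) (by simp)
      have e1 : pushL a (c :: s) = pcC (pushL a s) := by simp [pushL]
      rw [e1, ruleAC hok1, ruleAC (pushL_ok hok1 (by simp) (by simp)), ih hs, pcC_eq hhd]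
    | ci =>
      have hs := okB_tail h
      have hok1 : okB (pushL a s) := pushL_ok hs (by simp) (by simp)
      have e1 : pushL a (ci :: s) = pc (pushL a s) := by simp [pushL]
      rw [e1, ruleACi hok1, ruleACi (pushL_ok hok1 (by simp) (by simp)), ih hs, pc_pcC hs]
      rfl
    | ai => simp [okB, hd2ok] at h
    | bi => simp [okB, hd2ok] at h

/-- Prepend a letter (handling inverse generators) to a word, normalizing. -/
def push : B3Letter → List B3Letter → List B3Letter
  | ai, t => pc (pushL a (pushL a t))
  | bi, t => pc (pushL b t)
  | x, t => pushL x t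

/-- The normal form of a word. -/
def nf (w : List B3Letter) : List B3Letter := w.foldr push []

theorem push_ok {x t} (h : okB t) : okB (push x t) := by
  cases x <;> simp only [push] <;>
    first
      | exact pushL_ok h (by simp) (by simp)
      | exact pc_ok (pushL_ok (pushL_ok h (by simp) (by simp)) (by simp) (by simp))
      | exact pc_ok (pushL_ok h (by simp) (by simp))

theorem nf_ok (w : List B3Letter) : okB (nf w) := by
  induction w with
  | nil => rfl
  | cons x s ih => exact push_ok ih

/-! ### The rewriting relation -/

theorem step_cons {x : B3Letter} {u v} (h : RWStep B3System u v) :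
    RWStep B3System (x :: u) (x :: v) := by
  obtain ⟨p, l, r, q, hm, e1, e2⟩ := h
  exact ⟨x :: p, l, r, q, hm, by simp [e1], by simp [e2]⟩

theorem rt_cons {x : B3Letter} {u v} (h : ReflTransGen (RWStep B3System) u v) :
    ReflTransGen (RWStep B3System) (x :: u) (x :: v) :=
  ReflTransGen.lift (x :: ·) (fun _ _ hs => step_cons hs) _ _ h

theorem step_rule {l r : List B3Letter} (hm : (l, r) ∈ B3System) (q : List B3Letter) :
    RWStep B3System (l ++ q) (r ++ q) :=
  ⟨[], l, r, q, hm, by simp, by simp⟩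

theorem consC (t : List B3Letter) : ReflTransGen (RWStep B3System) (c :: t) (pcC t) := by
  rcases t with _ | ⟨y, s⟩
  · exact ReflTransGen.refl
  · cases y with
    | ci => exact ReflTransGen.single (step_rule (l := [c,ci]) (r := []) (by simp [B3System]) s)
    | a => rw [pcC_eq (by simp)]
    | b => rw [pcC_eq (by simp)]
    | c => rw [pcC_eq (by simp)]
    | ai => rw [pcC_eq (by simp)]
    | bi => rw [pcC_eq (by simp)]

theorem consCi (t : List B3Letter) : ReflTransGen (RWStep B3System) (ci :: t) (pc t) := by
  rcases t with _ | ⟨y, s⟩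
  · exact ReflTransGen.refl
  · cases y with
    | c => exact ReflTransGen.single (step_rule (l := [ci,c]) (r := []) (by simp [B3System]) s)
    | a => rw [pc_eq (by simp)]
    | b => rw [pc_eq (by simp)]
    | ci => rw [pc_eq (by simp)]
    | ai => rw [pc_eq (by simp)]
    | bi => rw [pc_eq (by simp)]

theorem consL {x : B3Letter} {t} (hx1 : x ≠ ai) (hx2 : x ≠ bi) :
    ReflTransGen (RWStep B3System) (x :: t) (pushL x t) := by
  induction x, t using pushL.induct with
  | case1 s =>
    exact ReflTransGen.trans
      (ReflTransGen.single (step_rule (l := [a,a,a]) (r := [c]) (by simp [B3System]) s))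
      (consC s)
  | case2 s ih =>
    have e : pushL a (c :: s) = pcC (pushL a s) := by simp [pushL]
    rw [e]
    exact ReflTransGen.trans
      (ReflTransGen.single (step_rule (l := [a,c]) (r := [c,a]) (by simp [B3System]) s))
      (ReflTransGen.trans (rt_cons (ih hx1 hx2)) (consC (pushL a s)))
  | case3 s ih =>
    have e : pushL a (ci :: s) = pc (pushL a s) := by simp [pushL]
    rw [e]
    exact ReflTransGen.trans
      (ReflTransGen.single (step_rule (l := [a,ci]) (r := [ci,a]) (by simp [B3System]) s))
      (ReflTransGen.trans (rt_cons (ih hx1 hx2)) (consCi (pushL a s)))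
  | case4 s =>
    exact ReflTransGen.trans
      (ReflTransGen.single (step_rule (l := [b,b]) (r := [c]) (by simp [B3System]) s))
      (consC s)
  | case5 s ih =>
    have e : pushL b (c :: s) = pcC (pushL b s) := by simp [pushL]
    rw [e]
    exact ReflTransGen.trans
      (ReflTransGen.single (step_rule (l := [b,c]) (r := [c,b]) (by simp [B3System]) s))
      (ReflTransGen.trans (rt_cons (ih hx1 hx2)) (consC (pushL b s)))
  | case6 s ih =>
    have e : pushL b (ci :: s) = pc (pushL b s) := by simp [pushL]
    rw [e]
    exact ReflTransGen.trans
      (ReflTransGen.single (step_rule (l := [b,ci]) (r := [ci,b]) (by simp [B3System]) s))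
      (ReflTransGen.trans (rt_cons (ih hx1 hx2)) (consCi (pushL b s)))
  | case7 t => simp only [pushL]; exact consC t
  | case8 t => simp only [pushL]; exact consCi t
  | case9 x t h1 h2 h3 h4 h5 h6 h7 h8 =>
    rw [pushL_default h1 h2 h3 h4 h5 h6 h7 h8]

theorem consPush (x : B3Letter) (t : List B3Letter) :
    ReflTransGen (RWStep B3System) (x :: t) (push x t) := by
  cases x with
  | ai =>
    refine ReflTransGen.trans
      (ReflTransGen.single (step_rule (l := [ai]) (r := [ci,a,a]) (by simp [B3System]) t)) ?_
    exact ReflTransGen.trans (rt_cons (rt_cons (consL (by simp) (by simp))))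
      (ReflTransGen.trans (rt_cons (consL (by simp) (by simp))) (consCi _))
  | bi =>
    refine ReflTransGen.trans
      (ReflTransGen.single (step_rule (l := [bi]) (r := [ci,b]) (by simp [B3System]) t)) ?_
    exact ReflTransGen.trans (rt_cons (consL (by simp) (by simp))) (consCi _)
  | a => exact consL (by simp) (by simp)
  | b => exact consL (by simp) (by simp)
  | c => exact consL (by simp) (by simp)
  | ci => exact consL (by simp) (by simp)

theorem to_nf (w : List B3Letter) : ReflTransGen (RWStep B3System) w (nf w) := by
  induction w with
  | nil => exact ReflTransGen.refl
  | cons x s ih => exact ReflTransGen.trans (rt_cons ih) (consPush x (nf s))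

theorem nf_append (u v : List B3Letter) : nf (u ++ v) = List.foldr push (nf v) u := by
  simp [nf, List.foldr_append]

theorem step_nf {w u : List B3Letter} (h : RWStep B3System w u) : nf w = nf u := by
  obtain ⟨p, l, r, q, hm, e1, e2⟩ := h
  subst e1; subst e2
  rw [List.append_assoc, List.append_assoc, nf_append, nf_append, nf_append, nf_append]
  congr 1
  have ht : okB (nf q) := nf_ok q
  set t := nf q with hdef
  clear hdef
  simp only [B3System, Set.mem_insert_iff, Set.mem_singleton_iff, Prod.mk.injEq] at hm
  rcases hm with ⟨rfl, rfl⟩ | ⟨rfl, rfl⟩ | ⟨rfl, rfl⟩ | ⟨rfl, rfl⟩ | ⟨rfl, rfl⟩ |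
    ⟨rfl, rfl⟩ | ⟨rfl, rfl⟩ | ⟨rfl, rfl⟩ | ⟨rfl, rfl⟩ | ⟨rfl, rfl⟩
  · simp only [List.foldr, push, pushL]
  · simp only [List.foldr, push, pushL]
  · simpa only [List.foldr, push, pushL] using ruleAAA ht
  · simpa only [List.foldr, push, pushL] using ruleBB ht
  · simpa only [List.foldr, push, pushL] using ruleAC ht
  · simpa only [List.foldr, push, pushL] using ruleACi ht
  · simpa only [List.foldr, push, pushL] using ruleBC ht
  · simpa only [List.foldr, push, pushL] using ruleBCi ht
  · simpa only [List.foldr, push, pushL] using pcC_pc ht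
  · simpa only [List.foldr, push, pushL] using pc_pcC ht

/-- The rewriting system `B3System` is locally confluent: all critical pairs resolve. -/
theorem B3System_locally_confluent :
    ∀ w u v : List B3Letter, RWStep B3System w u → RWStep B3System w v →
      ∃ z, Relation.ReflTransGen (RWStep B3System) u z ∧
        Relation.ReflTransGen (RWStep B3System) v z := by
  intro w u v hu hv
  refine ⟨nf w, ?_, ?_⟩
  · rw [step_nf hu]; exact to_nf u
  · rw [step_nf hv]; exact to_nf v
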